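/- Let tokens Y_1,…,Y_N be generated sequentially by model B with conditional laws p_n^B, and evaluated by model A with conditional laws p_n^A, where there exists ε ∈ (0,1/2] such that all nonzero conditional probabilities of both models are at least ε. Define l_A = -(1/N)∑_n log p_n^A(Y_n) and the average cross-entropy h_N(B,A) = (1/N)∑_n H(p_n^B, p_n^A). Then there is a universal constant c_3 > 0 such that for all t > 0, P(|l_A - h_N(B,A)| ≥ t) ≤ 2 exp(-(N t/(-c_3 log ε)) min(1, t/(-c_3 log ε))). -/

import Mathlib

/-- Probability of the token sequence `y` under the sequential generator `pB`. -/
noncomputable def seqProb {X : Type*} (pB : List X → X → ℝ) {N : ℕ}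
    (y : Fin N → X) : ℝ :=
  ∏ n : Fin N, pB ((List.ofFn y).take n.val) (y n)

/-- Log-perplexity of the sequence `y` under the evaluator model `pA`. -/
noncomputable def logPerp {X : Type*} (pA : List X → X → ℝ) {N : ℕ}
    (y : Fin N → X) : ℝ :=
  -((1 : ℝ) / N) * ∑ n : Fin N, Real.log (pA ((List.ofFn y).take n.val) (y n))

/-- Cross-entropy `H(pb, pa) = -∑ pb(x) log pa(x)`. -/
noncomputable def crossEnt {X : Type*} [Fintype X] (pb pa : X → ℝ) : ℝ :=
  -∑ x, pb x * Real.log (pa x)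

/-- Average cross-entropy `h_N(B,A)` along the sequence `y`. -/
noncomputable def avgCrossEntropy {X : Type*} [Fintype X] (pB pA : List X → X → ℝ)
    {N : ℕ} (y : Fin N → X) : ℝ :=
  ((1 : ℝ) / N) * ∑ n : Fin N,
    crossEnt (pB ((List.ofFn y).take n.val)) (pA ((List.ofFn y).take n.val))

/-- `exp u ≤ 1 + u + u²` for `|u| ≤ 1`. -/
lemma exp_le_one_add_add_sq {u : ℝ} (hu : |u| ≤ 1) :
    Real.exp u ≤ 1 + u + u ^ 2 := by
  have h := Real.exp_bound hu (n := 2) (by norm_num)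
  have h1 := (abs_sub_le_iff.1 h).1
  have h2 : ∑ m ∈ Finset.range 2, u ^ m / m.factorial = 1 + u := by
    simp [Finset.sum_range_succ]
  rw [h2] at h1
  rw [sq_abs] at h1
  norm_num [Nat.factorial] at h1
  nlinarith [sq_nonneg u]

/-- Key multiplicative lemma: iterated sums of products of per-step weights. -/
lemma key_prod_sum {X : Type} [Fintype X] (F : List X → X → ℝ) (K : ℝ)
    (hF : ∀ h x, 0 ≤ F h x) (hK : ∀ h, ∑ x, F h x ≤ K) (hK0 : 0 ≤ K) :
    ∀ (N : ℕ) (h : List X),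
      ∑ y : Fin N → X, ∏ n : Fin N, F (h ++ (List.ofFn y).take n.val) (y n) ≤ K ^ N := by
  intro N
  induction N with
  | zero => intro h; simp
  | succ N ih =>
    intro h
    rw [← Equiv.sum_comp (Fin.consEquiv fun _ => X)
        (fun y => ∏ n : Fin (N+1), F (h ++ (List.ofFn y).take n.val) (y n)),
      Fintype.sum_prod_type]
    have hterm : ∀ (x : X) (z : Fin N → X),
        (∏ n : Fin (N+1), F (h ++ (List.ofFn (Fin.consEquiv (fun _ => X) (x, z))).take n.val)
          ((Fin.consEquiv (fun _ => X) (x, z)) n))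
        = F h x * ∏ n : Fin N, F ((h ++ [x]) ++ (List.ofFn z).take n.val) (z n) := by
      intro x z
      have hcons : (Fin.consEquiv (fun _ => X)) (x, z) = Fin.cons x z := rfl
      rw [hcons, Fin.prod_univ_succ]
      congr 1
      · simp
      · apply Finset.prod_congr rfl
        intro i _
        have hofn : List.ofFn (Fin.cons x z : Fin (N+1) → X) = x :: List.ofFn z := by
          simp [List.ofFn_succ]
        rw [hofn]
        simp [List.take_succ_cons, List.append_assoc]
    calc ∑ x : X, ∑ z : Fin N → X,
          (∏ n : Fin (N+1), F (h ++ (List.ofFn (Fin.consEquiv (fun _ => X) (x, z))).take n.val)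
            ((Fin.consEquiv (fun _ => X) (x, z)) n))
        = ∑ x : X, F h x * ∑ z : Fin N → X,
            ∏ n : Fin N, F ((h ++ [x]) ++ (List.ofFn z).take n.val) (z n) := by
          apply Finset.sum_congr rfl; intro x _
          rw [Finset.mul_sum]
          exact Finset.sum_congr rfl fun z _ => hterm x z
      _ ≤ ∑ x : X, F h x * K ^ N := by
          apply Finset.sum_le_sum; intro x _
          exact mul_le_mul_of_nonneg_left (ih (h ++ [x])) (hF h x)
      _ = (∑ x : X, F h x) * K ^ N := by rw [Finset.sum_mul]
      _ ≤ K * K ^ N := mul_le_mul_of_nonneg_right (hK h) (pow_nonneg hK0 N)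
      _ = K ^ (N + 1) := (pow_succ' K N).symm

/-- Per-step mgf bound (Hoeffding-type). -/
lemma step_mgf_bound {X : Type} [Fintype X] (p g : X → ℝ) (L lam : ℝ)
    (hp : ∀ x, 0 ≤ p x) (hsum : ∑ x, p x = 1)
    (hg0 : ∀ x, 0 ≤ g x) (hgL : ∀ x, g x ≤ L) (hL0 : 0 ≤ L)
    (hlam : |lam| * L ≤ 1) :
    ∑ x, p x * Real.exp (lam * (g x - ∑ z, p z * g z)) ≤ Real.exp (lam ^ 2 * L ^ 2) := by
  set μ := ∑ z, p z * g z with hμ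
  have hμ0 : 0 ≤ μ := Finset.sum_nonneg fun x _ => mul_nonneg (hp x) (hg0 x)
  have hμL : μ ≤ L := by
    calc μ ≤ ∑ z, p z * L := Finset.sum_le_sum fun x _ =>
            mul_le_mul_of_nonneg_left (hgL x) (hp x)
      _ = (∑ z, p z) * L := by rw [Finset.sum_mul]
      _ = L := by rw [hsum, one_mul]
  have habs : ∀ x, |g x - μ| ≤ L := fun x =>
    abs_le.mpr ⟨by have := hg0 x; linarith, by have := hgL x; linarith⟩
  have hub : ∀ x, |lam * (g x - μ)| ≤ 1 := by
    intro x
    rw [abs_mul]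
    calc |lam| * |g x - μ| ≤ |lam| * L :=
          mul_le_mul_of_nonneg_left (habs x) (abs_nonneg lam)
      _ ≤ 1 := hlam
  calc ∑ x, p x * Real.exp (lam * (g x - μ))
      ≤ ∑ x, p x * (1 + lam * (g x - μ) + (lam * (g x - μ)) ^ 2) :=
        Finset.sum_le_sum fun x _ =>
          mul_le_mul_of_nonneg_left (exp_le_one_add_add_sq (hub x)) (hp x)
    _ = (∑ x, p x) + ((lam * ∑ x, p x * g x) - (lam * μ) * ∑ x, p x)
        + lam ^ 2 * ∑ x, p x * (g x - μ) ^ 2 := by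
        have hterm : ∀ x : X, p x * (1 + lam * (g x - μ) + (lam * (g x - μ)) ^ 2)
            = p x + (lam * (p x * g x) - (lam * μ) * p x) + lam ^ 2 * (p x * (g x - μ) ^ 2) := by
          intro x; ring
        simp_rw [hterm, Finset.sum_add_distrib, Finset.sum_sub_distrib, ← Finset.mul_sum]
    _ = 1 + lam ^ 2 * ∑ x, p x * (g x - μ) ^ 2 := by rw [hsum, ← hμ]; ring
    _ ≤ 1 + lam ^ 2 * (L ^ 2) := by
        have hsq : ∑ x, p x * (g x - μ) ^ 2 ≤ L ^ 2 := by
          calc ∑ x, p x * (g x - μ) ^ 2 ≤ ∑ x, p x * L ^ 2 :=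
                Finset.sum_le_sum fun x _ => mul_le_mul_of_nonneg_left
                  (by
                    have := habs x
                    calc (g x - μ) ^ 2 = |g x - μ| ^ 2 := (sq_abs _).symm
                      _ ≤ L ^ 2 := by nlinarith [abs_nonneg (g x - μ)]) (hp x)
            _ = (∑ x, p x) * L ^ 2 := by rw [Finset.sum_mul]
            _ = L ^ 2 := by rw [hsum, one_mul]
        nlinarith [sq_nonneg lam]
    _ ≤ Real.exp (lam ^ 2 * L ^ 2) := by
        have := Real.add_one_le_exp (lam ^ 2 * L ^ 2)
        linarith

/-- Theorem 1(b): there is a universal constant `c₃ > 0` such that if the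
text is generated by `B` and evaluated by `A`, both with all nonzero
conditional probabilities at least `ε ∈ (0,1/2]`, then for all `t > 0`,
`P(|l_A - h_N(B,A)| ≥ t) ≤ 2 exp(-(N t/(-c₃ log ε)) min(1, t/(-c₃ log ε)))`. -/
theorem logPerp_concentration_cross_model :
    ∃ c3 : ℝ, 0 < c3 ∧
      ∀ (X : Type) [Fintype X], ∀ (pA pB : List X → X → ℝ) (ε : ℝ),
        0 < ε → ε ≤ 1 / 2 →
        (∀ h : List X, (∀ x, 0 ≤ pA h x) ∧ ∑ x, pA h x = 1) →
        (∀ h : List X, (∀ x, 0 ≤ pB h x) ∧ ∑ x, pB h x = 1) →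
        (∀ h : List X, ∀ x, pA h x = 0 ∨ ε ≤ pA h x) →
        (∀ h : List X, ∀ x, pB h x = 0 ∨ ε ≤ pB h x) →
        ∀ N : ℕ, 0 < N → ∀ t : ℝ, 0 < t →
          (∑ y : Fin N → X,
              if t ≤ |logPerp pA y - avgCrossEntropy pB pA y| then seqProb pB y else 0)
            ≤ 2 * Real.exp (-(N * t / (-c3 * Real.log ε)) *
                min 1 (t / (-c3 * Real.log ε))) := by
  refine ⟨3, by norm_num, ?_⟩
  intro X _ pA pB ε hε hε2 hA hB hAε hBε N hN t ht
  set L : ℝ := -Real.log ε with hLdef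
  have hlogneg : Real.log ε < 0 := Real.log_neg hε (by linarith)
  have hL : 0 < L := by rw [hLdef]; linarith
  set g : List X → X → ℝ := fun h x => -Real.log (pA h x) with hgdef
  have hpA1 : ∀ h x, pA h x ≤ 1 := by
    intro h x
    calc pA h x ≤ ∑ z, pA h z :=
          Finset.single_le_sum (fun z _ => (hA h).1 z) (Finset.mem_univ x)
      _ = 1 := (hA h).2
  have hg0 : ∀ h x, 0 ≤ g h x := by
    intro h x
    rcases hAε h x with h0 | hεle
    · simp [hgdef, h0]
    · have : Real.log (pA h x) ≤ 0 :=
        Real.log_nonpos (by linarith) (hpA1 h x)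
      simp only [hgdef]
      linarith
  have hgL : ∀ h x, g h x ≤ L := by
    intro h x
    rcases hAε h x with h0 | hεle
    · simp only [hgdef, h0, Real.log_zero, neg_zero]
      linarith
    · have : Real.log ε ≤ Real.log (pA h x) := Real.log_le_log hε hεle
      simp only [hgdef, hLdef]
      linarith
  have hce : ∀ h : List X, crossEnt (pB h) (pA h) = ∑ x, pB h x * g h x := by
    intro h
    simp [crossEnt, hgdef, mul_neg, Finset.sum_neg_distrib]
  have hce0 : ∀ h : List X, 0 ≤ crossEnt (pB h) (pA h) := by
    intro h
    rw [hce h]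
    exact Finset.sum_nonneg fun x _ => mul_nonneg ((hB h).1 x) (hg0 h x)
  have hceL : ∀ h : List X, crossEnt (pB h) (pA h) ≤ L := by
    intro h
    rw [hce h]
    calc ∑ x, pB h x * g h x ≤ ∑ x, pB h x * L :=
          Finset.sum_le_sum fun x _ => mul_le_mul_of_nonneg_left (hgL h x) ((hB h).1 x)
      _ = (∑ x, pB h x) * L := by rw [Finset.sum_mul]
      _ = L := by rw [(hB h).2, one_mul]
  have hNpos : (0:ℝ) < (N:ℝ) := by exact_mod_cast hN
  set S : (Fin N → X) → ℝ := fun y => ∑ n : Fin N,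
      (g ((List.ofFn y).take n.val) (y n)
        - crossEnt (pB ((List.ofFn y).take n.val)) (pA ((List.ofFn y).take n.val))) with hSdef
  have hSrel : ∀ y : Fin N → X,
      (N:ℝ) * (logPerp pA y - avgCrossEntropy pB pA y) = S y := by
    intro y
    rw [hSdef]
    simp only [logPerp, avgCrossEntropy, Finset.sum_sub_distrib]
    have hgsum : ∑ n : Fin N, g ((List.ofFn y).take n.val) (y n)
        = -∑ n : Fin N, Real.log (pA ((List.ofFn y).take n.val) (y n)) := by
      simp only [hgdef, Finset.sum_neg_distrib]
    rw [hgsum]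
    field_simp
  have hseq0 : ∀ y : Fin N → X, 0 ≤ seqProb pB y := by
    intro y
    exact Finset.prod_nonneg fun n _ => (hB _).1 _
  -- bounds on logPerp and avgCrossEntropy
  have hlpbd : ∀ y : Fin N → X,
      0 ≤ logPerp pA y ∧ logPerp pA y ≤ L := by
    intro y
    have hform : logPerp pA y
        = (1/(N:ℝ)) * ∑ n : Fin N, g ((List.ofFn y).take n.val) (y n) := by
      simp only [logPerp, hgdef, Finset.sum_neg_distrib]
      ring
    have hs0 : 0 ≤ ∑ n : Fin N, g ((List.ofFn y).take n.val) (y n) :=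
      Finset.sum_nonneg fun n _ => hg0 _ _
    have hsL : ∑ n : Fin N, g ((List.ofFn y).take n.val) (y n) ≤ (N:ℝ) * L := by
      calc ∑ n : Fin N, g ((List.ofFn y).take n.val) (y n)
          ≤ ∑ _n : Fin N, L := Finset.sum_le_sum fun n _ => hgL _ _
        _ = (N:ℝ) * L := by simp [mul_comm]
    constructor
    · rw [hform]; positivity
    · rw [hform]
      calc (1/(N:ℝ)) * ∑ n : Fin N, g ((List.ofFn y).take n.val) (y n)
          ≤ (1/(N:ℝ)) * ((N:ℝ) * L) := by
            apply mul_le_mul_of_nonneg_left _ (by positivity)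
            calc ∑ n : Fin N, g ((List.ofFn y).take n.val) (y n)
                ≤ ∑ _n : Fin N, L := Finset.sum_le_sum fun n _ => hgL _ _
              _ = (N:ℝ) * L := by simp [mul_comm]
        _ = L := by field_simp
  have havgbd : ∀ y : Fin N → X,
      0 ≤ avgCrossEntropy pB pA y ∧ avgCrossEntropy pB pA y ≤ L := by
    intro y
    constructor
    · apply mul_nonneg (by positivity)
      exact Finset.sum_nonneg fun n _ => hce0 _
    · calc avgCrossEntropy pB pA y
          ≤ (1/(N:ℝ)) * ((N:ℝ) * L) := by
            apply mul_le_mul_of_nonneg_left _ (by positivity)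
            calc ∑ n : Fin N, crossEnt (pB ((List.ofFn y).take n.val))
                  (pA ((List.ofFn y).take n.val))
                ≤ ∑ _n : Fin N, L := Finset.sum_le_sum fun n _ => hceL _
              _ = (N:ℝ) * L := by simp [mul_comm]
        _ = L := by field_simp
  by_cases hcase : t ≤ L
  · -- main case: real concentration
    set lam : ℝ := t / (2 * L ^ 2) with hlamdef
    have hlampos : 0 < lam := by positivity
    have hlamL : |lam| * L ≤ 1 := by
      rw [abs_of_pos hlampos, hlamdef, div_mul_eq_mul_div, div_le_one (by positivity)]
      nlinarith
    have hmgf : ∀ s : ℝ, |s| * L ≤ 1 →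
        ∑ y : Fin N → X, seqProb pB y * Real.exp (s * S y)
          ≤ Real.exp ((N:ℝ) * (s ^ 2 * L ^ 2)) := by
      intro s hs
      have hkey := key_prod_sum
        (fun h x => pB h x * Real.exp (s * (g h x - crossEnt (pB h) (pA h))))
        (Real.exp (s ^ 2 * L ^ 2))
        (fun h x => mul_nonneg ((hB h).1 x) (Real.exp_pos _).le)
        (fun h => by
          have hb := step_mgf_bound (pB h) (g h) L s (hB h).1 (hB h).2
            (hg0 h) (hgL h) hL.le hs
          rw [← hce h] at hb
          exact hb)
        (Real.exp_pos _).le N []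
      simp only [List.nil_append] at hkey
      have hrw : ∀ y : Fin N → X,
          (∏ n : Fin N, pB ((List.ofFn y).take n.val) (y n) *
            Real.exp (s * (g ((List.ofFn y).take n.val) (y n)
              - crossEnt (pB ((List.ofFn y).take n.val)) (pA ((List.ofFn y).take n.val)))))
          = seqProb pB y * Real.exp (s * S y) := by
        intro y
        rw [Finset.prod_mul_distrib, ← Real.exp_sum, ← Finset.mul_sum]
        rfl
      calc ∑ y : Fin N → X, seqProb pB y * Real.exp (s * S y)
          = ∑ y : Fin N → X,
            ∏ n : Fin N, pB ((List.ofFn y).take n.val) (y n) *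
              Real.exp (s * (g ((List.ofFn y).take n.val) (y n)
                - crossEnt (pB ((List.ofFn y).take n.val)) (pA ((List.ofFn y).take n.val)))) :=
            (Finset.sum_congr rfl fun y _ => (hrw y).symm)
        _ ≤ Real.exp (s ^ 2 * L ^ 2) ^ N := hkey
        _ = Real.exp ((N:ℝ) * (s ^ 2 * L ^ 2)) := by rw [← Real.exp_nat_mul]
    have hmgf1 := hmgf lam hlamL
    have hmgf2 := hmgf (-lam) (by rwa [abs_neg])
    have hpt : ∀ y : Fin N → X,
        (if t ≤ |logPerp pA y - avgCrossEntropy pB pA y| then seqProb pB y else 0)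
          ≤ Real.exp (-(lam * ((N:ℝ) * t))) * (seqProb pB y * Real.exp (lam * S y))
            + Real.exp (-(lam * ((N:ℝ) * t))) * (seqProb pB y * Real.exp ((-lam) * S y)) := by
      intro y
      have hnn1 : 0 ≤ Real.exp (-(lam * ((N:ℝ) * t))) * (seqProb pB y * Real.exp (lam * S y)) :=
        mul_nonneg (Real.exp_pos _).le (mul_nonneg (hseq0 y) (Real.exp_pos _).le)
      have hnn2 : 0 ≤ Real.exp (-(lam * ((N:ℝ) * t))) *
          (seqProb pB y * Real.exp ((-lam) * S y)) :=
        mul_nonneg (Real.exp_pos _).le (mul_nonneg (hseq0 y) (Real.exp_pos _).le)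
      by_cases hy : t ≤ |logPerp pA y - avgCrossEntropy pB pA y|
      · rw [if_pos hy]
        have hSy : (N:ℝ) * t ≤ |S y| := by
          rw [← hSrel y, abs_mul, abs_of_pos hNpos]
          exact mul_le_mul_of_nonneg_left hy hNpos.le
        rcases le_abs.mp hSy with hS1 | hS1
        · -- N*t ≤ S y : use the lam term
          have h3 : seqProb pB y
              ≤ Real.exp (-(lam * ((N:ℝ) * t))) * (seqProb pB y * Real.exp (lam * S y)) := by
            calc seqProb pB y = seqProb pB y * 1 := (mul_one _).symm
              _ ≤ seqProb pB y * Real.exp (lam * S y - lam * ((N:ℝ)*t)) := by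
                  apply mul_le_mul_of_nonneg_left _ (hseq0 y)
                  calc (1:ℝ) = Real.exp 0 := Real.exp_zero.symm
                    _ ≤ Real.exp (lam * S y - lam * ((N:ℝ)*t)) := by
                        apply Real.exp_le_exp.mpr
                        nlinarith
              _ = Real.exp (-(lam * ((N:ℝ) * t))) * (seqProb pB y * Real.exp (lam * S y)) := by
                  rw [Real.exp_sub, Real.exp_neg]
                  ring
          linarith
        · -- N*t ≤ -S y : use the -lam term
          have h3 : seqProb pB y
              ≤ Real.exp (-(lam * ((N:ℝ) * t))) *
                (seqProb pB y * Real.exp ((-lam) * S y)) := by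
            calc seqProb pB y = seqProb pB y * 1 := (mul_one _).symm
              _ ≤ seqProb pB y * Real.exp ((-lam) * S y - lam * ((N:ℝ)*t)) := by
                  apply mul_le_mul_of_nonneg_left _ (hseq0 y)
                  calc (1:ℝ) = Real.exp 0 := Real.exp_zero.symm
                    _ ≤ Real.exp ((-lam) * S y - lam * ((N:ℝ)*t)) := by
                        apply Real.exp_le_exp.mpr
                        nlinarith
              _ = Real.exp (-(lam * ((N:ℝ) * t))) *
                  (seqProb pB y * Real.exp ((-lam) * S y)) := by
                  rw [Real.exp_sub, Real.exp_neg]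
                  ring
          linarith
      · rw [if_neg hy]
        linarith
    calc (∑ y : Fin N → X,
            if t ≤ |logPerp pA y - avgCrossEntropy pB pA y| then seqProb pB y else 0)
        ≤ ∑ y : Fin N → X,
            (Real.exp (-(lam * ((N:ℝ) * t))) * (seqProb pB y * Real.exp (lam * S y))
              + Real.exp (-(lam * ((N:ℝ) * t))) * (seqProb pB y * Real.exp ((-lam) * S y))) :=
          Finset.sum_le_sum fun y _ => hpt y
      _ = Real.exp (-(lam * ((N:ℝ) * t))) *
            (∑ y : Fin N → X, seqProb pB y * Real.exp (lam * S y))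
          + Real.exp (-(lam * ((N:ℝ) * t))) *
            (∑ y : Fin N → X, seqProb pB y * Real.exp ((-lam) * S y)) := by
          rw [Finset.sum_add_distrib, Finset.mul_sum, Finset.mul_sum]
      _ ≤ Real.exp (-(lam * ((N:ℝ) * t))) * Real.exp ((N:ℝ) * (lam ^ 2 * L ^ 2))
          + Real.exp (-(lam * ((N:ℝ) * t))) * Real.exp ((N:ℝ) * ((-lam) ^ 2 * L ^ 2)) := by
          gcongr
      _ = 2 * Real.exp ((N:ℝ) * (lam ^ 2 * L ^ 2) - lam * ((N:ℝ) * t)) := by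
          have hsq : ((-lam):ℝ) ^ 2 = lam ^ 2 := by ring
          rw [hsq, ← Real.exp_add]
          have he : -(lam * ((N:ℝ) * t)) + (N:ℝ) * (lam ^ 2 * L ^ 2)
              = (N:ℝ) * (lam ^ 2 * L ^ 2) - lam * ((N:ℝ) * t) := by ring
          rw [he, two_mul]
      _ ≤ 2 * Real.exp (-((N:ℝ) * t / (-3 * Real.log ε)) *
            min 1 (t / (-3 * Real.log ε))) := by
          apply mul_le_mul_of_nonneg_left _ (by norm_num : (0:ℝ) ≤ 2)
          apply Real.exp_le_exp.mpr
          have h3L : -(3:ℝ) * Real.log ε = 3 * L := by rw [hLdef]; ring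
          rw [h3L]
          have hmin : min 1 (t / (3 * L)) = t / (3 * L) := by
            apply min_eq_right
            rw [div_le_one (by positivity)]
            linarith
          rw [hmin]
          have e1 : (N:ℝ) * (lam ^ 2 * L ^ 2) - lam * ((N:ℝ) * t)
              = -((N:ℝ) * t ^ 2 / (4 * L ^ 2)) := by
            rw [hlamdef]
            field_simp
            ring
          have e2 : -((N:ℝ) * t / (3 * L)) * (t / (3 * L))
              = -((N:ℝ) * t ^ 2 / (9 * L ^ 2)) := by
            field_simp
            ring
          rw [e1, e2]
          have hd : (N:ℝ) * t ^ 2 / (9 * L ^ 2) ≤ (N:ℝ) * t ^ 2 / (4 * L ^ 2) := by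
            apply div_le_div_of_nonneg_left (by positivity) (by positivity)
            nlinarith
          linarith
  · -- trivial case t > L : indicator is always zero
    push_neg at hcase
    have hzero : ∀ y ∈ (Finset.univ : Finset (Fin N → X)),
        (if t ≤ |logPerp pA y - avgCrossEntropy pB pA y| then seqProb pB y else 0) = 0 := by
      intro y _
      rw [if_neg]
      push_neg
      have h1 := hlpbd y
      have h2 := havgbd y
      calc |logPerp pA y - avgCrossEntropy pB pA y| ≤ L :=
            abs_le.mpr ⟨by linarith [h1.1, h2.2], by linarith [h1.2, h2.1]⟩
        _ < t := hcase
    rw [Finset.sum_eq_zero hzero]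
    positivity
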